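/- Lemma 1 (feasibility of downward adjustment): Let p_min(i), p_max(i) be generator limits for i = 1,…,N with 0 ≤ p_min(i) < p_max(i), and let C ∈ ℝ denote the risk-based required power. Suppose (a) max_i p_min(i) < min_i (p_max(i) - p_min(i)), and (b) 0 < C - Σ_{i=1}^{k-1} p_max(i) < p_min(k) for some 2 ≤ k ≤ N. Then p_min(k-1) < C - Σ_{i=1}^{k-2} p_max(i) - p_min(k) < p_max(k-1). -/
import Mathlib

/-- Lemma 1 (feasibility of downward adjustment): generator `k-1` can reduce its
output so that generator `k` runs at its minimum, staying within its own limits. -/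
theorem stmt_8 (N k : ℕ) (pmin pmax : ℕ → ℝ) (C : ℝ)
    (hk2 : 2 ≤ k) (hkN : k ≤ N)
    (hbounds : ∀ i ∈ Finset.Icc 1 N, 0 ≤ pmin i ∧ pmin i < pmax i)
    (ha : ∀ i ∈ Finset.Icc 1 N, ∀ j ∈ Finset.Icc 1 N, pmin i < pmax j - pmin j)
    (hb1 : 0 < C - ∑ i ∈ Finset.Icc 1 (k - 1), pmax i)
    (hb2 : C - ∑ i ∈ Finset.Icc 1 (k - 1), pmax i < pmin k) :
    pmin (k - 1) < C - (∑ i ∈ Finset.Icc 1 (k - 2), pmax i) - pmin k ∧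
      C - (∑ i ∈ Finset.Icc 1 (k - 2), pmax i) - pmin k < pmax (k - 1) := by
  have hk1 : k - 1 = (k - 2) + 1 := by omega
  have hsum : ∑ i ∈ Finset.Icc 1 (k - 1), pmax i
      = (∑ i ∈ Finset.Icc 1 (k - 2), pmax i) + pmax (k - 1) := by
    rw [hk1, Finset.sum_Icc_succ_top (by omega), ← hk1]
  rw [hsum] at hb1 hb2
  have hkm : k - 1 ∈ Finset.Icc 1 N := by simp [Finset.mem_Icc]; omega
  have hkk : k ∈ Finset.Icc 1 N := by simp [Finset.mem_Icc]; omega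
  have h1 := ha k hkk (k - 1) hkm
  constructor <;> linarith
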